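/- For almost every x in [0,1), the normalized count of points of the lattice x + 2^n ℤ lying in a measurable set C ⊆ [0,1), i.e. #((x + 2^n ℤ) ∩ C) / 2^{-n}, tends to the Lebesgue measure of C as n → -∞. -/

import Mathlib

open MeasureTheory Filter Set
open scoped ENNReal NNReal

noncomputable def dy (m : ℕ) : ℝ := (2:ℝ) ^ (-(m:ℤ))
noncomputable def rm (m : ℕ) (x : ℝ) : ℝ := Int.fract ((2:ℝ)^m * x) * dy m
noncomputable def cnt (E : Set ℝ) (m : ℕ) (x : ℝ) : ℝ :=
  ∑ j ∈ Finset.range (2^m), E.indicator (fun _ => (1:ℝ)) (rm m x + j * dy m)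
noncomputable def Am (E : Set ℝ) (m : ℕ) (x : ℝ) : ℝ := dy m * cnt E m x

lemma dy_pos (m : ℕ) : 0 < dy m := by rw [dy]; positivity

lemma two_pow_mul_dy (m : ℕ) : (2:ℝ)^m * dy m = 1 := by
  rw [dy, ← zpow_natCast (2:ℝ) m, ← zpow_add₀ (by norm_num : (2:ℝ) ≠ 0)]
  simp

lemma dy_mul_two_pow (m : ℕ) : dy m * (2:ℝ)^m = 1 := by
  rw [mul_comm]; exact two_pow_mul_dy m

lemma dy_le_one (m : ℕ) : dy m ≤ 1 := by
  rw [dy]; exact zpow_le_one_of_nonpos₀ (by norm_num) (by simp)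

lemma dy_eq (p m : ℕ) (h : p ≤ m) : dy p = (2:ℝ)^(m - p) * dy m := by
  rw [dy, dy, ← zpow_natCast (2:ℝ) (m - p), ← zpow_add₀ (by norm_num : (2:ℝ) ≠ 0)]
  congr 1
  have : (m : ℤ) - (p : ℤ) = ((m - p : ℕ) : ℤ) := by omega
  omega

lemma rm_mem (m : ℕ) (x : ℝ) : rm m x ∈ Ico 0 (dy m) := by
  constructor
  · exact mul_nonneg (Int.fract_nonneg _) (dy_pos m).le
  · calc Int.fract ((2:ℝ)^m * x) * dy m < 1 * dy m := by
          exact mul_lt_mul_of_pos_right (Int.fract_lt_one _) (dy_pos m)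
    _ = dy m := one_mul _

lemma rm_add_floor (m : ℕ) (x : ℝ) : rm m x + (⌊(2:ℝ)^m * x⌋ : ℝ) * dy m = x := by
  have h : (2:ℝ)^m * x * dy m = x := by
    rw [mul_comm ((2:ℝ)^m) x, mul_assoc, two_pow_mul_dy, mul_one]
  rw [rm, Int.fract, sub_mul]
  linarith

lemma rm_add_int (m : ℕ) (x : ℝ) (k : ℤ) : rm m (x + k * dy m) = rm m x := by
  have h : (2:ℝ)^m * ((k:ℝ) * dy m) = (k:ℝ) := by
    rw [mul_comm ((2:ℝ)^m), mul_assoc, dy_mul_two_pow, mul_one]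
  rw [rm, rm, mul_add, h, Int.fract_add_intCast]

lemma rm_eq_self (m : ℕ) (x : ℝ) (hx : x ∈ Ico 0 (dy m)) : rm m x = x := by
  rw [rm]
  have h1 : (2:ℝ)^m * x ∈ Ico (0:ℝ) 1 := by
    constructor
    · exact mul_nonneg (by positivity) hx.1
    · calc (2:ℝ)^m * x < (2:ℝ)^m * dy m := by
            exact mul_lt_mul_of_pos_left hx.2 (by positivity)
      _ = 1 := two_pow_mul_dy m
  rw [Int.fract_eq_self.2 ⟨h1.1, h1.2⟩, mul_comm, ← mul_assoc, dy_mul_two_pow, one_mul]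

lemma rm_rm (m m' : ℕ) (h : m ≤ m') (x : ℝ) : rm m' (rm m x) = rm m' x := by
  conv_rhs => rw [← rm_add_floor m x]
  rw [show (⌊(2:ℝ)^m * x⌋ : ℝ) * dy m = ((⌊(2:ℝ)^m * x⌋ * 2^(m'-m) : ℤ) : ℝ) * dy m' by
    push_cast
    rw [dy_eq m m' h]; ring]
  rw [rm_add_int]

lemma measurable_rm (m : ℕ) : Measurable (rm m) :=
  (measurable_fract.comp (measurable_const_mul _)).mul_const _

lemma measurable_cnt {E : Set ℝ} (hE : MeasurableSet E) (m : ℕ) : Measurable (cnt E m) :=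
  Finset.measurable_sum _ fun j _ =>
    (measurable_const.indicator hE).comp ((measurable_rm m).add_const _)

lemma measurable_Am {E : Set ℝ} (hE : MeasurableSet E) (m : ℕ) : Measurable (Am E m) :=
  (measurable_cnt hE m).const_mul _

lemma cnt_rm (E : Set ℝ) {m' m : ℕ} (h : m' ≤ m) (x : ℝ) :
    cnt E m (rm m' x) = cnt E m x := by
  unfold cnt; rw [rm_rm m' m h]

lemma Am_rm (E : Set ℝ) {m' m : ℕ} (h : m' ≤ m) (x : ℝ) :
    Am E m (rm m' x) = Am E m x := by
  unfold Am; rw [cnt_rm E h]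

noncomputable def Dyad (p a : ℕ) : Set ℝ := Ico ((a:ℝ) * dy p) (((a:ℝ)+1) * dy p)

lemma mem_dyad_iff {p a m : ℕ} (hm : p ≤ m) (j : ℕ) {r : ℝ} (hr : r ∈ Ico 0 (dy m)) :
    (r + (j:ℝ) * dy m ∈ Dyad p a) ↔ (a * 2^(m-p) ≤ j ∧ j < (a+1) * 2^(m-p)) := by
  have hdm := dy_pos m
  have hde := dy_eq p m hm
  obtain ⟨hr0, hr1⟩ := hr
  constructor
  · rintro ⟨h1, h2⟩
    rw [hde] at h1 h2
    constructor
    · by_contra hc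
      push_neg at hc
      have hj1 : (j:ℝ) + 1 ≤ (a * 2^(m-p) : ℕ) := by exact_mod_cast hc
      have : r + (j:ℝ) * dy m < ((j:ℝ)+1) * dy m := by nlinarith
      have hcast : ((a * 2^(m-p) : ℕ) : ℝ) = (a:ℝ) * 2^(m-p) := by push_cast; ring
      nlinarith
    · have : (j:ℝ) * dy m < ((a:ℝ)+1) * 2^(m-p) * dy m := by nlinarith
      have hj : (j:ℝ) < ((a:ℝ)+1) * 2^(m-p) := by
        have h2m : (0:ℝ) < 2^(m-p) := by positivity
        nlinarith
      have : (j:ℝ) < (((a+1) * 2^(m-p) : ℕ) : ℝ) := by push_cast; push_cast at hj; linarith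
      exact_mod_cast this
  · rintro ⟨h1, h2⟩
    have h1' : ((a * 2^(m-p) : ℕ) : ℝ) ≤ (j:ℝ) := by exact_mod_cast h1
    have h2' : ((j:ℝ)+1) ≤ (((a+1) * 2^(m-p) : ℕ) : ℝ) := by exact_mod_cast h2
    push_cast at h1' h2'
    constructor
    · rw [hde]; nlinarith
    · rw [hde]; nlinarith

lemma cnt_dyad {p a m : ℕ} (ha : a < 2^p) (hm : p ≤ m) (x : ℝ) :
    cnt (Dyad p a) m x = (2^(m-p) : ℕ) := by
  have hr := rm_mem m x
  have hpow : 2^p * 2^(m-p) = 2^m := by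
    rw [← pow_add]; congr 1; omega
  have hsub : Finset.Ico (a * 2^(m-p)) ((a+1) * 2^(m-p)) ⊆ Finset.range (2^m) := by
    intro j hj
    rw [Finset.mem_Ico] at hj
    rw [Finset.mem_range]
    have : (a+1) * 2^(m-p) ≤ 2^p * 2^(m-p) := Nat.mul_le_mul_right _ ha
    omega
  have hmem : ∀ j ∈ Finset.Ico (a * 2^(m-p)) ((a+1) * 2^(m-p)),
      (Dyad p a).indicator (fun _ => (1:ℝ)) (rm m x + (j:ℝ) * dy m) = 1 := fun j hj =>
    Set.indicator_of_mem ((mem_dyad_iff hm j hr).2 (Finset.mem_Ico.1 hj)) _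
  have hnot : ∀ j ∈ Finset.range (2^m), j ∉ Finset.Ico (a * 2^(m-p)) ((a+1) * 2^(m-p)) →
      (Dyad p a).indicator (fun _ => (1:ℝ)) (rm m x + (j:ℝ) * dy m) = 0 := by
    intro j _ hj'
    rw [Finset.mem_Ico] at hj'
    push_neg at hj'
    refine Set.indicator_of_notMem ?_ _
    rw [mem_dyad_iff hm j hr]
    rintro ⟨h1, h2⟩
    exact absurd (hj' h1) (Nat.not_le.2 h2)
  unfold cnt
  rw [← Finset.sum_subset hsub hnot, Finset.sum_congr rfl hmem, Finset.sum_const, Nat.card_Ico]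
  have hd : (a+1) * 2^(m-p) - a * 2^(m-p) = 2^(m-p) := by
    have h : (a+1) * 2^(m-p) = a * 2^(m-p) + 2^(m-p) := by ring
    rw [h, Nat.add_sub_cancel_left]
  rw [hd]; simp

lemma Am_dyad {p a m : ℕ} (ha : a < 2^p) (hm : p ≤ m) (x : ℝ) :
    Am (Dyad p a) m x = dy p := by
  rw [Am, cnt_dyad ha hm, dy_eq p m hm]
  push_cast
  ring

lemma Ico01_eq_dyad : Ico (0:ℝ) 1 = Dyad 0 0 := by
  unfold Dyad dy
  norm_num

lemma Am_Ico01 (m : ℕ) (x : ℝ) : Am (Ico (0:ℝ) 1) m x = 1 := by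
  rw [Ico01_eq_dyad, Am_dyad (by norm_num) (Nat.zero_le m), dy]
  norm_num

lemma cnt_nonneg (E : Set ℝ) (m : ℕ) (x : ℝ) : 0 ≤ cnt E m x :=
  Finset.sum_nonneg fun j _ => Set.indicator_nonneg (fun _ _ => zero_le_one) _

lemma Am_nonneg (E : Set ℝ) (m : ℕ) (x : ℝ) : 0 ≤ Am E m x :=
  mul_nonneg (dy_pos m).le (cnt_nonneg E m x)

lemma cnt_mono {E F : Set ℝ} (h : E ⊆ F) (m : ℕ) (x : ℝ) : cnt E m x ≤ cnt F m x :=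
  Finset.sum_le_sum fun j _ =>
    Set.indicator_le_indicator_of_subset h (fun _ => zero_le_one) _

lemma Am_mono {E F : Set ℝ} (h : E ⊆ F) (m : ℕ) (x : ℝ) : Am E m x ≤ Am F m x :=
  mul_le_mul_of_nonneg_left (cnt_mono h m x) (dy_pos m).le

lemma cnt_union_le (E F : Set ℝ) (m : ℕ) (x : ℝ) :
    cnt (E ∪ F) m x ≤ cnt E m x + cnt F m x := by
  unfold cnt
  rw [← Finset.sum_add_distrib]
  refine Finset.sum_le_sum fun j _ => ?_
  set y := rm m x + (j:ℝ) * dy m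
  by_cases hE : y ∈ E
  · rw [Set.indicator_of_mem (Set.mem_union_left _ hE), Set.indicator_of_mem hE]
    have : (0:ℝ) ≤ F.indicator (fun _ => (1:ℝ)) y := Set.indicator_nonneg (fun _ _ => zero_le_one) _
    linarith
  · by_cases hF : y ∈ F
    · rw [Set.indicator_of_mem (Set.mem_union_right _ hF), Set.indicator_of_mem hF,
        Set.indicator_of_notMem hE]
      norm_num
    · rw [Set.indicator_of_notMem (fun hy => hy.elim hE hF), Set.indicator_of_notMem hE,
        Set.indicator_of_notMem hF]
      norm_num

lemma Am_union_le (E F : Set ℝ) (m : ℕ) (x : ℝ) :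
    Am (E ∪ F) m x ≤ Am E m x + Am F m x := by
  rw [Am, Am, Am, ← mul_add]
  exact mul_le_mul_of_nonneg_left (cnt_union_le E F m x) (dy_pos m).le

lemma cnt_union_disjoint {E F : Set ℝ} (h : Disjoint E F) (m : ℕ) (x : ℝ) :
    cnt (E ∪ F) m x = cnt E m x + cnt F m x := by
  unfold cnt
  rw [← Finset.sum_add_distrib]
  refine Finset.sum_congr rfl fun j _ => ?_
  exact congrFun (Set.indicator_union_of_disjoint h _) _

lemma Am_union_disjoint {E F : Set ℝ} (h : Disjoint E F) (m : ℕ) (x : ℝ) :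
    Am (E ∪ F) m x = Am E m x + Am F m x := by
  rw [Am, Am, Am, ← mul_add, cnt_union_disjoint h]

lemma Am_compl_eq {C : Set ℝ} (hC1 : C ⊆ Ico (0:ℝ) 1) (m : ℕ) (x : ℝ) :
    Am C m x + Am (Ico (0:ℝ) 1 \ C) m x = 1 := by
  rw [← Am_union_disjoint (disjoint_sdiff_right.mono_left le_rfl), Set.union_diff_cancel hC1]
  exact Am_Ico01 m x

lemma key_bounds {C : Set ℝ} (hC1 : C ⊆ Ico (0:ℝ) 1) {m : ℕ} {r : ℝ}
    (hr : r ∈ Ico 0 (dy m)) {t : ℤ} (ht : r + (t:ℝ) * dy m ∈ C) : 0 ≤ t ∧ t < 2^m := by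
  obtain ⟨h0, h1⟩ := hC1 ht
  have hd := dy_pos m
  constructor
  · by_contra hc
    push_neg at hc
    have h2 : (t:ℝ) ≤ -1 := by
      have h1 : t ≤ -1 := by omega
      exact_mod_cast h1
    nlinarith [hr.1, hr.2]
  · by_contra hc
    push_neg at hc
    have h2 : ((2:ℝ))^m ≤ (t:ℝ) := by exact_mod_cast hc
    have h3 : (2:ℝ)^m * dy m = 1 := two_pow_mul_dy m
    nlinarith [hr.1]

lemma natCard_eq_cnt {C : Set ℝ} (hC1 : C ⊆ Ico (0:ℝ) 1) (m : ℕ) (x : ℝ) :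
    (Nat.card {k : ℤ // x + (k:ℝ) * dy m ∈ C} : ℝ) = cnt C m x := by
  classical
  set b := ⌊(2:ℝ)^m * x⌋ with hb
  have hkey : ∀ k : ℤ, x + (k:ℝ) * dy m = rm m x + ((k + b : ℤ):ℝ) * dy m := by
    intro k
    conv_lhs => rw [← rm_add_floor m x]
    push_cast
    ring
  have hr := rm_mem m x
  -- the equivalence
  have e : {k : ℤ // x + (k:ℝ) * dy m ∈ C} ≃
      {j : ℕ // j ∈ Finset.filter (fun j : ℕ => rm m x + (j:ℝ) * dy m ∈ C) (Finset.range (2^m))} := by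
    refine ⟨fun k => ⟨(k.1 + b).toNat, ?_⟩, fun j => ⟨(j.1 : ℤ) - b, ?_⟩, ?_, ?_⟩
    · have hk := k.2
      rw [hkey k.1] at hk
      obtain ⟨ht0, ht2⟩ := key_bounds hC1 hr hk
      rw [Finset.mem_filter, Finset.mem_range]
      constructor
      · have : ((k.1 + b).toNat : ℤ) < 2^m := by rw [Int.toNat_of_nonneg ht0]; exact ht2
        exact_mod_cast this
      · convert hk using 3
        exact_mod_cast Int.toNat_of_nonneg ht0
    · have hj := j.2
      rw [Finset.mem_filter] at hj
      rw [hkey]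
      have : ((j.1 : ℤ) - b + b : ℤ) = (j.1 : ℤ) := by ring
      rw [this]
      exact_mod_cast hj.2
    · intro k
      ext
      have hk := k.2
      rw [hkey k.1] at hk
      obtain ⟨ht0, _⟩ := key_bounds hC1 hr hk
      simp only
      rw [Int.toNat_of_nonneg ht0]
      ring
    · intro j
      ext
      simp only
      omega
  rw [Nat.card_congr e, Nat.card_eq_fintype_card, Fintype.card_coe]
  rw [Finset.card_filter]
  push_cast
  unfold cnt
  refine Finset.sum_congr rfl fun j _ => by simp [Set.indicator_apply]

lemma lintegral_Ico_translate {d c : ℝ} (hd : 0 ≤ d) (f : ℝ → ℝ≥0∞) :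
    ∫⁻ x in Ico c (c + d), f x = ∫⁻ y in Ico 0 d, f (y + c) := by
  have hmeas : MeasurableSet (Ico c (c + d)) := measurableSet_Ico
  set g : ℝ → ℝ≥0∞ := (Ico c (c + d)).indicator f with hg
  have h1 : ∫⁻ x in Ico c (c + d), f x = ∫⁻ x, g x := (lintegral_indicator hmeas _).symm
  have h2 : ∀ y : ℝ, (Ico (0:ℝ) d).indicator (fun y => f (y + c)) y = g (y + c) := by
    intro y
    by_cases hy : y ∈ Ico (0:ℝ) d
    · rw [Set.indicator_of_mem hy]
      rw [hg, Set.indicator_of_mem (by constructor <;> [linarith [hy.1]; linarith [hy.2]])]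
    · rw [Set.indicator_of_notMem hy, hg, Set.indicator_of_notMem]
      intro hmem
      exact hy ⟨by linarith [hmem.1], by linarith [hmem.2]⟩
  have h3 : ∫⁻ y in Ico (0:ℝ) d, f (y + c) = ∫⁻ y, g (y + c) := by
    rw [← lintegral_indicator measurableSet_Ico]
    exact lintegral_congr h2
  rw [h1, h3, lintegral_add_right_eq_self g c]

lemma master (m : ℕ) (f : ℝ → ℝ≥0∞) :
    ∫⁻ x in Ico (0:ℝ) 1, f x
      = ∑ i ∈ Finset.range (2^m), ∫⁻ y in Ico 0 (dy m), f (y + (i:ℝ) * dy m) := by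
  have hd := dy_pos m
  suffices h : ∀ n : ℕ, ∫⁻ x in Ico (0:ℝ) ((n:ℝ) * dy m), f x
      = ∑ i ∈ Finset.range n, ∫⁻ y in Ico 0 (dy m), f (y + (i:ℝ) * dy m) by
    have h2 := h (2^m)
    rw [show (((2:ℕ)^m : ℕ):ℝ) * dy m = 1 by push_cast; exact two_pow_mul_dy m] at h2
    exact h2
  intro n
  induction n with
  | zero => simp
  | succ n ih =>
    have hsplit : Ico (0:ℝ) (((n:ℝ)+1) * dy m)
        = Ico (0:ℝ) ((n:ℝ) * dy m) ∪ Ico ((n:ℝ) * dy m) ((n:ℝ) * dy m + dy m) := by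
      rw [Set.Ico_union_Ico_eq_Ico (by positivity) (by nlinarith)]
      congr 1
      ring
    push_cast
    rw [hsplit, lintegral_union measurableSet_Ico Set.Ico_disjoint_Ico_same, ih,
      lintegral_Ico_translate hd.le f, Finset.sum_range_succ]

lemma Am_add_int (E : Set ℝ) (m : ℕ) (x : ℝ) (k : ℤ) :
    Am E m (x + (k:ℝ) * dy m) = Am E m x := by
  unfold Am cnt
  rw [rm_add_int]

lemma ofReal_Am_eq (E : Set ℝ) (m : ℕ) {y : ℝ} (hy : y ∈ Ico 0 (dy m)) :
    ENNReal.ofReal (Am E m y)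
      = ENNReal.ofReal (dy m)
        * ∑ j ∈ Finset.range (2^m), E.indicator (fun _ => (1:ℝ≥0∞)) (y + (j:ℝ) * dy m) := by
  rw [Am, ENNReal.ofReal_mul (dy_pos m).le]
  congr 1
  unfold cnt
  rw [rm_eq_self m y hy, ENNReal.ofReal_sum_of_nonneg
    (fun j _ => Set.indicator_nonneg (fun _ _ => zero_le_one) _)]
  refine Finset.sum_congr rfl fun j _ => ?_
  by_cases h : y + (j:ℝ) * dy m ∈ E
  · rw [Set.indicator_of_mem h, Set.indicator_of_mem h, ENNReal.ofReal_one]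
  · rw [Set.indicator_of_notMem h, Set.indicator_of_notMem h, ENNReal.ofReal_zero]

lemma one_eq_pow_mul_ofReal (m : ℕ) : ((2:ℝ≥0∞))^m * ENNReal.ofReal (dy m) = 1 := by
  have h1 : ENNReal.ofReal ((2:ℝ)^m) = ((2:ℝ≥0∞))^m := by
    rw [ENNReal.ofReal_pow (by norm_num : (0:ℝ) ≤ 2)]
    norm_num
  rw [← h1, ← ENNReal.ofReal_mul (by positivity), two_pow_mul_dy, ENNReal.ofReal_one]

lemma setLintegral_Am_eq {E : Set ℝ} (hE : MeasurableSet E) {m : ℕ} {B : Set ℝ}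
    (hB : MeasurableSet B) :
    ∫⁻ x in Ico (0:ℝ) 1, B.indicator (fun _ => (1:ℝ≥0∞)) (rm m x) * ENNReal.ofReal (Am E m x)
      = ∫⁻ x in Ico (0:ℝ) 1, B.indicator (fun _ => (1:ℝ≥0∞)) (rm m x)
          * E.indicator (fun _ => (1:ℝ≥0∞)) x := by
  have hIm : MeasurableSet (Ico (0:ℝ) (dy m)) := measurableSet_Ico
  set d : ℕ → ℝ≥0∞ := fun j =>
    ∫⁻ y in Ico (0:ℝ) (dy m),
      B.indicator (fun _ => (1:ℝ≥0∞)) y * E.indicator (fun _ => (1:ℝ≥0∞)) (y + (j:ℝ) * dy m)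
    with hdd
  have hcast : ∀ i : ℕ, ∀ y : ℝ, y + (i:ℝ) * dy m = y + ((i:ℤ):ℝ) * dy m := by
    intro i y; norm_num
  rw [master m, master m]
  have hLHS : ∀ i ∈ Finset.range (2^m),
      (∫⁻ y in Ico (0:ℝ) (dy m),
        B.indicator (fun _ => (1:ℝ≥0∞)) (rm m (y + (i:ℝ) * dy m))
          * ENNReal.ofReal (Am E m (y + (i:ℝ) * dy m)))
      = ENNReal.ofReal (dy m) * ∑ j ∈ Finset.range (2^m), d j := by
    intro i _
    rw [setLIntegral_congr_fun hIm (g := fun y =>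
      ENNReal.ofReal (dy m) * ∑ j ∈ Finset.range (2^m),
        B.indicator (fun _ => (1:ℝ≥0∞)) y
          * E.indicator (fun _ => (1:ℝ≥0∞)) (y + (j:ℝ) * dy m)) ?_]
    · have hmeas : ∀ j ∈ Finset.range (2^m), Measurable (fun y : ℝ =>
          B.indicator (fun _ => (1:ℝ≥0∞)) y
            * E.indicator (fun _ => (1:ℝ≥0∞)) (y + (j:ℝ) * dy m)) := fun j _ =>
        (measurable_const.indicator hB).mul
          ((measurable_const.indicator hE).comp (measurable_add_const _))
      rw [lintegral_const_mul' _ _ ENNReal.ofReal_ne_top, lintegral_finset_sum _ hmeas]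
    · intro y hy
      dsimp only
      rw [hcast i y, rm_add_int, rm_eq_self m y hy, Am_add_int, ofReal_Am_eq E m hy,
        ← Finset.mul_sum]
      ring
  have hRHS : ∀ i ∈ Finset.range (2^m),
      (∫⁻ y in Ico (0:ℝ) (dy m),
        B.indicator (fun _ => (1:ℝ≥0∞)) (rm m (y + (i:ℝ) * dy m))
          * E.indicator (fun _ => (1:ℝ≥0∞)) (y + (i:ℝ) * dy m))
      = d i := by
    intro i _
    refine setLIntegral_congr_fun hIm ?_
    intro y hy
    dsimp only
    rw [hcast i y, rm_add_int, rm_eq_self m y hy]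
  rw [Finset.sum_congr rfl hLHS, Finset.sum_congr rfl hRHS, Finset.sum_const,
    Finset.card_range, nsmul_eq_mul, ← mul_assoc]
  have h2 : ((2^m : ℕ) : ℝ≥0∞) = (2:ℝ≥0∞)^m := by push_cast; ring
  rw [h2, one_eq_pow_mul_ofReal m, one_mul]

lemma maximal {E : Set ℝ} (hE : MeasurableSet E) {lam : ℝ} (hlam : 0 < lam) :
    ENNReal.ofReal lam * volume {x | x ∈ Ico (0:ℝ) 1 ∧ ∃ m : ℕ, lam < Am E m x}
      ≤ volume E := by
  classical
  have hfin : ∀ M : ℕ, ENNReal.ofReal lam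
      * volume {x | x ∈ Ico (0:ℝ) 1 ∧ ∃ m, m ≤ M ∧ lam < Am E m x} ≤ volume E := by
    intro M
    set B : ℕ → Set ℝ := fun m =>
      (Ico 0 (dy m) ∩ Am E m ⁻¹' Ioi lam) ∩ ⋂ m' ∈ Ioc m M, Am E m' ⁻¹' Iic lam with hB
    have hBmeas : ∀ m, MeasurableSet (B m) := by
      intro m
      refine (measurableSet_Ico.inter ((measurable_Am hE m) measurableSet_Ioi)).inter ?_
      exact MeasurableSet.biInter (Set.to_countable _)
        fun m' _ => (measurable_Am hE m') measurableSet_Iic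
    set D : ℕ → Set ℝ := fun m => Ico (0:ℝ) 1 ∩ rm m ⁻¹' B m with hD
    have hDmeas : ∀ m, MeasurableSet (D m) :=
      fun m => measurableSet_Ico.inter ((measurable_rm m) (hBmeas m))
    have hmemD : ∀ m x, x ∈ D m ↔ x ∈ Ico (0:ℝ) 1 ∧ lam < Am E m x
        ∧ ∀ m', m < m' → m' ≤ M → Am E m' x ≤ lam := by
      intro m x
      simp only [hD, hB, Set.mem_inter_iff, Set.mem_preimage, Set.mem_iInter, Set.mem_Ioc,
        Set.mem_Ioi, Set.mem_Iic, and_assoc]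
      constructor
      · rintro ⟨h1, _, h3, h4⟩
        refine ⟨h1, by rwa [Am_rm E le_rfl] at h3, ?_⟩
        intro m' hm1 hm2
        have h5 := h4 m' ⟨hm1, hm2⟩
        rwa [Am_rm E (le_of_lt hm1)] at h5
      · rintro ⟨h1, h2, h3⟩
        refine ⟨h1, rm_mem m x, by rwa [Am_rm E le_rfl], ?_⟩
        intro m' hm'
        rw [Am_rm E (le_of_lt hm'.1)]
        exact h3 m' hm'.1 hm'.2
    have hcheb : ∀ m, ENNReal.ofReal lam * volume (D m) ≤ volume (D m ∩ E) := by
      intro m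
      have hA : ∫⁻ x in Ico (0:ℝ) 1,
          (B m).indicator (fun _ => (1:ℝ≥0∞)) (rm m x) * ENNReal.ofReal lam
          = ENNReal.ofReal lam * volume (D m) := by
        have hpt : ∀ x : ℝ, (B m).indicator (fun _ => (1:ℝ≥0∞)) (rm m x) * ENNReal.ofReal lam
            = (rm m ⁻¹' B m).indicator (fun _ => ENNReal.ofReal lam) x := by
          intro x
          by_cases hx : rm m x ∈ B m
          · rw [Set.indicator_of_mem hx, one_mul,
              Set.indicator_of_mem (show x ∈ rm m ⁻¹' B m from hx)]
          · rw [Set.indicator_of_notMem hx, zero_mul,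
              Set.indicator_of_notMem (show x ∉ rm m ⁻¹' B m from hx)]
        rw [lintegral_congr hpt, lintegral_indicator_const ((measurable_rm m) (hBmeas m)),
          Measure.restrict_apply ((measurable_rm m) (hBmeas m))]
        rw [Set.inter_comm]
      have hC : ∫⁻ x in Ico (0:ℝ) 1,
          (B m).indicator (fun _ => (1:ℝ≥0∞)) (rm m x) * E.indicator (fun _ => (1:ℝ≥0∞)) x
          = volume (D m ∩ E) := by
        have hpt : ∀ x : ℝ, (B m).indicator (fun _ => (1:ℝ≥0∞)) (rm m x)
            * E.indicator (fun _ => (1:ℝ≥0∞)) x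
            = (rm m ⁻¹' B m ∩ E).indicator (fun _ => (1:ℝ≥0∞)) x := by
          intro x
          by_cases hx : rm m x ∈ B m
          · by_cases hx2 : x ∈ E
            · rw [Set.indicator_of_mem hx, Set.indicator_of_mem hx2,
                Set.indicator_of_mem (show x ∈ rm m ⁻¹' B m ∩ E from ⟨hx, hx2⟩), one_mul]
            · rw [Set.indicator_of_notMem hx2, Set.indicator_of_notMem
                (show x ∉ rm m ⁻¹' B m ∩ E from fun hc => hx2 hc.2), mul_zero]
          · rw [Set.indicator_of_notMem hx, Set.indicator_of_notMem
              (show x ∉ rm m ⁻¹' B m ∩ E from fun hc => hx hc.1), zero_mul]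
        rw [lintegral_congr hpt,
          lintegral_indicator_const (((measurable_rm m) (hBmeas m)).inter hE),
          Measure.restrict_apply (((measurable_rm m) (hBmeas m)).inter hE), one_mul]
        congr 1
        rw [hD]
        ext z
        simp only [Set.mem_inter_iff, Set.mem_preimage]
        tauto
      have hmono : ∫⁻ x in Ico (0:ℝ) 1,
          (B m).indicator (fun _ => (1:ℝ≥0∞)) (rm m x) * ENNReal.ofReal lam
          ≤ ∫⁻ x in Ico (0:ℝ) 1,
          (B m).indicator (fun _ => (1:ℝ≥0∞)) (rm m x) * ENNReal.ofReal (Am E m x) := by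
        refine lintegral_mono fun x => ?_
        by_cases hx : rm m x ∈ B m
        · refine mul_le_mul_right (ENNReal.ofReal_le_ofReal ?_) _
          have h2 := hx.1.2
          rw [Set.mem_preimage, Set.mem_Ioi, Am_rm E le_rfl] at h2
          exact h2.le
        · rw [Set.indicator_of_notMem hx, zero_mul, zero_mul]
      rw [← hA, ← hC]
      exact hmono.trans (le_of_eq (setLintegral_Am_eq hE (hBmeas m)))
    have hGeq : {x | x ∈ Ico (0:ℝ) 1 ∧ ∃ m, m ≤ M ∧ lam < Am E m x}
        = ⋃ m ∈ Finset.range (M+1), D m := by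
      ext x
      simp only [Set.mem_setOf_eq, Set.mem_iUnion, Finset.mem_range, hmemD]
      constructor
      · rintro ⟨hx1, m0, hm0, hlt⟩
        have hPspec := Nat.findGreatest_spec (P := fun m => lam < Am E m x) hm0 hlt
        have hPle := Nat.findGreatest_le (P := fun m => lam < Am E m x) M
        refine ⟨Nat.findGreatest (fun m => lam < Am E m x) M, by omega, hx1, hPspec, ?_⟩
        intro m' h1 h2
        have h3 := Nat.findGreatest_is_greatest (P := fun m => lam < Am E m x) (n := M) h1 h2
        exact not_lt.1 h3
      · rintro ⟨m, hm, hx1, hlt, _⟩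
        exact ⟨hx1, m, by omega, hlt⟩
    have hdisj : Set.PairwiseDisjoint ↑(Finset.range (M+1)) D := by
      intro m1 hm1 m2 hm2 hne
      rw [Finset.coe_range, Set.mem_Iio] at hm1 hm2
      rw [Function.onFun]
      rcases lt_or_gt_of_ne hne with h | h
      · rw [Set.disjoint_left]
        intro a ha1 ha2
        have h1 := ((hmemD m1 a).1 ha1).2.2 m2 h (by omega)
        have h2 := ((hmemD m2 a).1 ha2).2.1
        linarith
      · rw [Set.disjoint_left]
        intro a ha1 ha2
        have h1 := ((hmemD m2 a).1 ha2).2.2 m1 h (by omega)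
        have h2 := ((hmemD m1 a).1 ha1).2.1
        linarith
    rw [hGeq, measure_biUnion_finset hdisj (fun m _ => hDmeas m), Finset.mul_sum]
    calc ∑ m ∈ Finset.range (M+1), ENNReal.ofReal lam * volume (D m)
        ≤ ∑ m ∈ Finset.range (M+1), volume (D m ∩ E) :=
          Finset.sum_le_sum fun m _ => hcheb m
      _ = volume (⋃ m ∈ Finset.range (M+1), (D m ∩ E)) := by
          rw [measure_biUnion_finset (fun m1 hm1 m2 hm2 hne =>
            ((hdisj hm1 hm2 hne).mono Set.inter_subset_left Set.inter_subset_left))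
            (fun m _ => (hDmeas m).inter hE)]
      _ ≤ volume E := by
          refine measure_mono ?_
          intro z hz
          simp only [Set.mem_iUnion] at hz
          obtain ⟨m, _, hz2⟩ := hz
          exact hz2.2
  -- pass to the limit
  have hUeq : {x | x ∈ Ico (0:ℝ) 1 ∧ ∃ m : ℕ, lam < Am E m x}
      = ⋃ M : ℕ, {x | x ∈ Ico (0:ℝ) 1 ∧ ∃ m, m ≤ M ∧ lam < Am E m x} := by
    ext x
    simp only [Set.mem_setOf_eq, Set.mem_iUnion]
    constructor
    · rintro ⟨h1, m, h2⟩
      exact ⟨m, h1, m, le_rfl, h2⟩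
    · rintro ⟨M, h1, m, _, h2⟩
      exact ⟨h1, m, h2⟩
  rw [hUeq, Directed.measure_iUnion (directed_of_isDirected_le fun M1 M2 h => by
    intro x hx
    obtain ⟨h1, m, h2, h3⟩ := hx
    exact ⟨h1, m, by omega, h3⟩), ENNReal.mul_iSup]
  exact iSup_le hfin

lemma exists_dy_lt {δ : ℝ} (hδ : 0 < δ) : ∃ p : ℕ, dy p < δ := by
  obtain ⟨p, hp⟩ := exists_pow_lt_of_lt_one hδ (by norm_num : (1:ℝ)/2 < 1)
  refine ⟨p, ?_⟩
  have : dy p = ((1:ℝ)/2)^p := by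
    rw [dy, one_div, inv_pow, ← zpow_natCast (2:ℝ) p, ← zpow_neg]
  rwa [this]

lemma mem_dyad_floor {x : ℝ} (hx : x ∈ Ico (0:ℝ) 1) (p : ℕ) :
    (⌊(2:ℝ)^p * x⌋).toNat < 2^p ∧ x ∈ Dyad p ((⌊(2:ℝ)^p * x⌋).toNat) := by
  have h0 : (0:ℝ) ≤ (2:ℝ)^p * x := mul_nonneg (by positivity) hx.1
  have hf0 : 0 ≤ ⌊(2:ℝ)^p * x⌋ := Int.floor_nonneg.2 h0
  have hlt : (2:ℝ)^p * x < 2^p := by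
    have := hx.2
    nlinarith [pow_pos (by norm_num : (0:ℝ) < 2) p]
  have hfl : ⌊(2:ℝ)^p * x⌋ < 2^p := by
    have : ((⌊(2:ℝ)^p * x⌋ : ℤ):ℝ) < ((2^p : ℤ):ℝ) := by
      calc ((⌊(2:ℝ)^p * x⌋ : ℤ):ℝ) ≤ (2:ℝ)^p * x := Int.floor_le _
        _ < (2:ℝ)^p := hlt
        _ = ((2^p : ℤ):ℝ) := by push_cast; ring
    exact_mod_cast this
  constructor
  · have h3 : (((⌊(2:ℝ)^p * x⌋).toNat : ℤ)) < (2^p : ℤ) := by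
      rw [Int.toNat_of_nonneg hf0]; exact hfl
    exact_mod_cast h3
  · have hc : (((⌊(2:ℝ)^p * x⌋).toNat : ℕ) : ℝ) = ((⌊(2:ℝ)^p * x⌋ : ℤ) : ℝ) := by
      exact_mod_cast congrArg (Int.cast : ℤ → ℝ) (Int.toNat_of_nonneg hf0)
    have hd := dy_pos p
    have hdm := two_pow_mul_dy p
    constructor
    · rw [hc]
      have h1 : ((⌊(2:ℝ)^p * x⌋ : ℤ) : ℝ) ≤ (2:ℝ)^p * x := Int.floor_le _
      nlinarith
    · rw [hc]
      have h1 : (2:ℝ)^p * x < ((⌊(2:ℝ)^p * x⌋ : ℤ) : ℝ) + 1 := Int.lt_floor_add_one _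
      nlinarith

lemma dyad_subset {p N a a' : ℕ} (hpN : p ≤ N) {x : ℝ}
    (h1 : x ∈ Dyad N a') (h2 : x ∈ Dyad p a) : Dyad N a' ⊆ Dyad p a := by
  have hdN := dy_pos N
  have hdp := dy_pos p
  have hde := dy_eq p N hpN
  obtain ⟨h1a, h1b⟩ := h1
  obtain ⟨h2a, h2b⟩ := h2
  -- a * 2^(N-p) ≤ a' and a'+1 ≤ (a+1) * 2^(N-p), as integers
  have hA : (a * 2^(N-p) : ℕ) ≤ a' := by
    by_contra hc
    push_neg at hc
    have hc' : (a' : ℝ) + 1 ≤ ((a * 2^(N-p) : ℕ) : ℝ) := by exact_mod_cast hc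
    push_cast at hc'
    rw [hde] at h2a
    nlinarith
  have hB : (a' : ℕ) + 1 ≤ (a+1) * 2^(N-p) := by
    by_contra hc
    push_neg at hc
    have hc' : (((a+1) * 2^(N-p) : ℕ) : ℝ) ≤ (a' : ℝ) := by exact_mod_cast Nat.lt_succ_iff.1 hc
    push_cast at hc'
    rw [hde] at h2b
    nlinarith
  intro z hz
  obtain ⟨hza, hzb⟩ := hz
  have hA' : ((a * 2^(N-p) : ℕ) : ℝ) ≤ (a' : ℝ) := by exact_mod_cast hA
  have hB' : ((a' : ℝ) + 1) ≤ (((a+1) * 2^(N-p) : ℕ) : ℝ) := by exact_mod_cast hB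
  push_cast at hA' hB'
  constructor
  · rw [hde]; nlinarith
  · rw [hde]; nlinarith

lemma dyad_disjoint {p a b : ℕ} (hab : a ≠ b) : Disjoint (Dyad p a) (Dyad p b) := by
  have hd := dy_pos p
  rw [Set.disjoint_left]
  rintro z ⟨h1a, h1b⟩ ⟨h2a, h2b⟩
  rcases Nat.lt_or_ge a b with h | h
  · have : (a:ℝ) + 1 ≤ (b:ℝ) := by exact_mod_cast h
    nlinarith
  · have hba : b < a := by omega
    have : (b:ℝ) + 1 ≤ (a:ℝ) := by exact_mod_cast hba
    nlinarith

lemma volume_dyad (p a : ℕ) : volume (Dyad p a) = ENNReal.ofReal (dy p) := by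
  rw [Dyad, Real.volume_Ico]
  congr 1
  ring

lemma Am_empty (m : ℕ) (x : ℝ) : Am ∅ m x = 0 := by
  unfold Am cnt
  simp

lemma Am_biUnion_le {α : Type*} [DecidableEq α] (S : Finset α) (f : α → Set ℝ) (m : ℕ) (x : ℝ) :
    Am (⋃ a ∈ S, f a) m x ≤ ∑ a ∈ S, Am (f a) m x := by
  induction S using Finset.induction with
  | empty => simp [Am_empty]
  | insert _ _ hni ih =>
    rename_i a S
    rw [Finset.set_biUnion_insert, Finset.sum_insert hni]
    exact (Am_union_le _ _ m x).trans (by linarith [ih])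

lemma measurableSet_dyad (p a : ℕ) : MeasurableSet (Dyad p a) := measurableSet_Ico

lemma dyad_subset_Ico01 {p a : ℕ} (ha : a < 2^p) : Dyad p a ⊆ Ico (0:ℝ) 1 := by
  have hd := dy_pos p
  have hdm := two_pow_mul_dy p
  rintro z ⟨h1, h2⟩
  have ha' : (a:ℝ) + 1 ≤ (2:ℝ)^p := by exact_mod_cast Nat.succ_le_of_lt ha
  constructor
  · nlinarith [mul_nonneg (Nat.cast_nonneg a : (0:ℝ) ≤ a) hd.le]
  · nlinarith

lemma approx {E : Set ℝ} (hE1 : E ⊆ Ico (0:ℝ) 1) {ε : ℝ} (hε : 0 < ε) :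
    ∃ U : Set ℝ, MeasurableSet U ∧ E ⊆ U ∧ volume U ≤ volume E + ENNReal.ofReal ε ∧
      ∃ UN : ℕ → Set ℝ, (∀ N, MeasurableSet (UN N)) ∧ Monotone UN ∧ (⋃ N, UN N) = U ∧
        ∀ N : ℕ, ∀ m, N ≤ m → ∀ x, Am (UN N) m x ≤ (volume U).toReal := by
  classical
  have hEfin : volume E ≠ ⊤ := by
    refine ne_of_lt (lt_of_le_of_lt (measure_mono hE1) ?_)
    rw [Real.volume_Ico]
    exact ENNReal.ofReal_lt_top
  obtain ⟨U₀, hU₀sub, hU₀open, hU₀vol⟩ := Set.exists_isOpen_lt_of_lt E _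
    (ENNReal.lt_add_right hEfin (ENNReal.ofReal_pos.2 hε).ne')
  set 𝒰 : Set (ℕ × ℕ) := {q | q.2 < 2^q.1 ∧ Dyad q.1 q.2 ⊆ U₀} with h𝒰
  set U : Set ℝ := ⋃ q ∈ 𝒰, Dyad q.1 q.2 with hU
  set UN : ℕ → Set ℝ := fun N => ⋃ q ∈ {q ∈ 𝒰 | q.1 ≤ N ∧ q.2 ≤ N}, Dyad q.1 q.2 with hUN
  have hUsubU₀ : U ⊆ U₀ := by
    rw [hU]
    exact Set.iUnion₂_subset fun q hq => hq.2
  have hUfin : volume U ≠ ⊤ :=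
    ne_of_lt (lt_of_le_of_lt (measure_mono hUsubU₀) (lt_of_lt_of_le hU₀vol le_top))
  have hUmeas : MeasurableSet U :=
    MeasurableSet.biUnion (Set.to_countable _) fun q _ => measurableSet_dyad _ _
  have hDyadU : ∀ q ∈ 𝒰, Dyad q.1 q.2 ⊆ U := by
    intro q hq
    rw [hU]
    exact Set.subset_biUnion_of_mem (u := fun q : ℕ × ℕ => Dyad q.1 q.2) hq
  refine ⟨U, hUmeas, ?_, le_of_lt (lt_of_le_of_lt (measure_mono hUsubU₀) hU₀vol), UN,
    fun N => MeasurableSet.biUnion (Set.to_countable _) fun q _ => measurableSet_dyad _ _,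
    ?_, ?_, ?_⟩
  · -- E ⊆ U
    intro x hx
    have hx1 : x ∈ Ico (0:ℝ) 1 := hE1 hx
    obtain ⟨δ, hδ, hball⟩ := Metric.isOpen_iff.1 hU₀open x (hU₀sub hx)
    obtain ⟨p, hp⟩ := exists_dy_lt hδ
    obtain ⟨ha, hxd⟩ := mem_dyad_floor hx1 p
    have hdp := dy_pos p
    have hsubball : Dyad p ((⌊(2:ℝ)^p * x⌋).toNat) ⊆ Metric.ball x δ := by
      rintro z ⟨h1, h2⟩
      obtain ⟨h3, h4⟩ := hxd
      rw [Metric.mem_ball, Real.dist_eq, abs_lt]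
      constructor <;> nlinarith
    refine Set.mem_biUnion (show ((p, (⌊(2:ℝ)^p * x⌋).toNat) : ℕ × ℕ) ∈ 𝒰 from
      ⟨ha, hsubball.trans hball⟩) hxd
  · -- monotone
    intro N1 N2 h
    refine Set.iUnion₂_subset fun q hq => ?_
    exact Set.subset_biUnion_of_mem (u := fun q : ℕ × ℕ => Dyad q.1 q.2)
      ⟨hq.1, le_trans hq.2.1 h, le_trans hq.2.2 h⟩
  · -- union = U
    apply Set.Subset.antisymm
    · exact Set.iUnion_subset fun N => Set.iUnion₂_subset fun q hq =>
        Set.subset_biUnion_of_mem (u := fun q : ℕ × ℕ => Dyad q.1 q.2) hq.1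
    · rw [hU]
      refine Set.iUnion₂_subset fun q hq => ?_
      refine Set.subset_iUnion_of_subset (max q.1 q.2) ?_
      exact Set.subset_biUnion_of_mem (u := fun q : ℕ × ℕ => Dyad q.1 q.2)
        ⟨hq, le_max_left _ _, le_max_right _ _⟩
  · -- the bound
    intro N m hm x
    set S : Finset ℕ := (Finset.range (2^N)).filter (fun a => Dyad N a ⊆ U) with hS
    have hsub : UN N ⊆ ⋃ a ∈ S, Dyad N a := by
      rw [hUN]
      refine Set.iUnion₂_subset fun q hq => ?_
      intro z hz
      have hz1 : z ∈ Ico (0:ℝ) 1 := dyad_subset_Ico01 hq.1.1 hz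
      obtain ⟨ha', hzd⟩ := mem_dyad_floor hz1 N
      have hnest : Dyad N ((⌊(2:ℝ)^N * z⌋).toNat) ⊆ Dyad q.1 q.2 :=
        dyad_subset hq.2.1 hzd hz
      have haS : (⌊(2:ℝ)^N * z⌋).toNat ∈ S := by
        rw [hS, Finset.mem_filter, Finset.mem_range]
        exact ⟨ha', hnest.trans (hDyadU q hq.1)⟩
      exact Set.mem_biUnion haS hzd
    have hb1 : Am (UN N) m x ≤ ∑ a ∈ S, Am (Dyad N a) m x :=
      (Am_mono hsub m x).trans (Am_biUnion_le S _ m x)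
    have hb2 : ∑ a ∈ S, Am (Dyad N a) m x = (S.card : ℝ) * dy N := by
      rw [Finset.sum_congr rfl (fun a ha => Am_dyad (Finset.mem_range.1 (Finset.mem_filter.1 ha).1) hm x),
        Finset.sum_const, nsmul_eq_mul]
    have hb3 : volume (⋃ a ∈ S, Dyad N a) = (S.card : ℝ≥0∞) * ENNReal.ofReal (dy N) := by
      rw [measure_biUnion_finset (fun a _ b _ hab => dyad_disjoint hab)
        (fun a _ => measurableSet_dyad _ _)]
      rw [Finset.sum_congr rfl (fun a _ => volume_dyad N a), Finset.sum_const, nsmul_eq_mul]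
    have hb4 : (⋃ a ∈ S, Dyad N a) ⊆ U := by
      refine Set.iUnion₂_subset fun a ha => ?_
      exact (Finset.mem_filter.1 ha).2
    have hb5 : ((S.card : ℝ≥0∞) * ENNReal.ofReal (dy N)).toReal ≤ (volume U).toReal := by
      rw [← hb3]
      exact ENNReal.toReal_mono hUfin (measure_mono hb4)
    rw [ENNReal.toReal_mul, ENNReal.toReal_natCast, ENNReal.toReal_ofReal (dy_pos N).le] at hb5
    linarith

lemma vol_fin {E : Set ℝ} (hE1 : E ⊆ Ico (0:ℝ) 1) : volume E ≠ ⊤ := by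
  refine ne_of_lt (lt_of_le_of_lt (measure_mono hE1) ?_)
  rw [Real.volume_Ico]
  exact ENNReal.ofReal_lt_top

lemma ae_eventually_le {E : Set ℝ} (hE : MeasurableSet E) (hE1 : E ⊆ Ico (0:ℝ) 1)
    {c : ℝ} (hc : 0 < c) :
    ∀ᵐ x, x ∈ Ico (0:ℝ) 1 → ∀ᶠ m in atTop, Am E m x ≤ (volume E).toReal + c := by
  have hlam : 0 < c/2 := by positivity
  have hEfin : volume E ≠ ⊤ := vol_fin hE1
  obtain ⟨U, hUmeas, hEU, hUvol, UN, hUNmeas, hUNmono, hUNunion, hUNbound⟩ := approx hE1 hlam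
  have hUfin : volume U ≠ ⊤ :=
    ne_of_lt (lt_of_le_of_lt hUvol (ENNReal.add_lt_top.2
      ⟨lt_top_iff_ne_top.2 hEfin, ENNReal.ofReal_lt_top⟩))
  have hUtoReal : (volume U).toReal ≤ (volume E).toReal + c/2 := by
    calc (volume U).toReal ≤ (volume E + ENNReal.ofReal (c/2)).toReal :=
          ENNReal.toReal_mono (ENNReal.add_ne_top.2 ⟨hEfin, ENNReal.ofReal_ne_top⟩) hUvol
      _ = (volume E).toReal + c/2 := by
          rw [ENNReal.toReal_add hEfin ENNReal.ofReal_ne_top, ENNReal.toReal_ofReal hlam.le]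
  set Z := {x | x ∈ Ico (0:ℝ) 1 ∧ ¬ ∀ᶠ m in atTop, Am E m x ≤ (volume E).toReal + c} with hZ
  have hZsub : ∀ N, Z ⊆ {x | x ∈ Ico (0:ℝ) 1 ∧ ∃ m : ℕ, c/2 < Am (U \ UN N) m x} := by
    intro N x hx
    refine ⟨hx.1, ?_⟩
    by_contra hcon
    push_neg at hcon
    refine hx.2 ?_
    rw [eventually_atTop]
    refine ⟨N, fun m hm => ?_⟩
    have h1 : Am E m x ≤ Am (UN N) m x + Am (U \ UN N) m x := by
      refine (Am_mono (show E ⊆ UN N ∪ (U \ UN N) from ?_) m x).trans (Am_union_le _ _ m x)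
      rw [Set.union_diff_cancel (hUNunion ▸ Set.subset_iUnion UN N)]
      exact hEU
    have h2 := hUNbound N m hm x
    have h3 := hcon m
    linarith
  have hmeaszero : volume Z = 0 := by
    have hineq : ∀ N, ENNReal.ofReal (c/2) * volume Z ≤ volume (U \ UN N) := by
      intro N
      calc ENNReal.ofReal (c/2) * volume Z
          ≤ ENNReal.ofReal (c/2)
            * volume {x | x ∈ Ico (0:ℝ) 1 ∧ ∃ m : ℕ, c/2 < Am (U \ UN N) m x} :=
            mul_le_mul_right (measure_mono (hZsub N)) _
        _ ≤ volume (U \ UN N) := maximal (hUmeas.diff (hUNmeas N)) hlam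
    have htend : Tendsto (fun N => volume (U \ UN N)) atTop (nhds 0) := by
      have h0 : ⋂ N, (U \ UN N) = ∅ := by
        rw [← Set.diff_iUnion, hUNunion]
        simp
      have ht := tendsto_measure_iInter_atTop
        (fun N => (hUmeas.diff (hUNmeas N)).nullMeasurableSet)
        (fun N1 N2 h => Set.diff_subset_diff_right (hUNmono h))
        ⟨0, ne_of_lt (lt_of_le_of_lt (measure_mono Set.diff_subset) (lt_top_iff_ne_top.2 hUfin))⟩
      rw [h0] at ht
      rw [measure_empty] at ht
      exact ht
    have hle : ENNReal.ofReal (c/2) * volume Z ≤ 0 := ge_of_tendsto' htend hineq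
    rcases mul_eq_zero.mp (le_antisymm hle (by positivity)) with h | h
    · exact absurd h (ENNReal.ofReal_pos.2 hlam).ne'
    · exact h
  rw [ae_iff]
  refine measure_mono_null ?_ hmeaszero
  intro x hx
  simp only [Set.mem_setOf_eq] at hx ⊢
  push_neg at hx
  exact ⟨hx.1, fun h => hx.2 (h.mono fun m hm => not_lt.2 hm)⟩

lemma dy_def (m : ℕ) : (2:ℝ)^(-(m:ℤ)) = dy m := rfl

/-- For a.e. `x ∈ [0,1)`, `2^{-m} · #((x + 2^{-m}ℤ) ∩ C) → μ(C)` as `m → ∞`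
(i.e. as the lattice mesh `2^n`, `n → -∞`, shrinks). -/
theorem lattice_count_tendsto_measure
    (C : Set ℝ) (hC : MeasurableSet C) (hC1 : C ⊆ Set.Ico (0:ℝ) 1) :
    ∀ᵐ x ∂(volume.restrict (Set.Ico (0:ℝ) 1)),
      Tendsto
        (fun m : ℕ =>
          (2:ℝ) ^ (-(m:ℤ)) *
            (Nat.card {k : ℤ // x + (k:ℝ) * (2:ℝ) ^ (-(m:ℤ)) ∈ C} : ℝ))
        atTop (nhds (volume C).toReal) := by
  have hC' : MeasurableSet (Ico (0:ℝ) 1 \ C) := measurableSet_Ico.diff hC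
  have hC1' : Ico (0:ℝ) 1 \ C ⊆ Ico (0:ℝ) 1 := Set.diff_subset
  have hfinC : volume C ≠ ⊤ := vol_fin hC1
  have hfinC' : volume (Ico (0:ℝ) 1 \ C) ≠ ⊤ := vol_fin hC1'
  have hsum : (volume C).toReal + (volume (Ico (0:ℝ) 1 \ C)).toReal = 1 := by
    have hdisj : Disjoint C (Ico (0:ℝ) 1 \ C) := Set.disjoint_sdiff_right
    have hunion : C ∪ (Ico (0:ℝ) 1 \ C) = Ico (0:ℝ) 1 := Set.union_diff_cancel hC1
    have hvol : volume C + volume (Ico (0:ℝ) 1 \ C) = volume (Ico (0:ℝ) 1) := by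
      rw [← measure_union hdisj hC', hunion]
    have h2 : (volume C + volume (Ico (0:ℝ) 1 \ C)).toReal = 1 := by
      rw [hvol, Real.volume_Ico]
      norm_num
    rwa [ENNReal.toReal_add hfinC hfinC'] at h2
  have hpos : ∀ i : ℕ, (0:ℝ) < 1/((i:ℝ)+1) := fun i => by positivity
  rw [ae_restrict_iff' measurableSet_Ico]
  filter_upwards [ae_all_iff.2 fun i : ℕ => ae_eventually_le hC hC1 (hpos i),
    ae_all_iff.2 fun i : ℕ => ae_eventually_le hC' hC1' (hpos i)] with x h1 h2 hmem
  have heq : ∀ m : ℕ, (2:ℝ) ^ (-(m:ℤ)) *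
      (Nat.card {k : ℤ // x + (k:ℝ) * (2:ℝ) ^ (-(m:ℤ)) ∈ C} : ℝ) = Am C m x := by
    intro m
    rw [dy_def, Am, natCard_eq_cnt hC1 m x]
  refine Tendsto.congr (fun m => (heq m).symm) ?_
  rw [Metric.tendsto_atTop]
  intro ε hε
  obtain ⟨i, hi⟩ : ∃ i : ℕ, 1/((i:ℝ)+1) < ε/2 := exists_nat_one_div_lt (by positivity)
  obtain ⟨N1, hN1⟩ := eventually_atTop.1 (h1 i hmem)
  obtain ⟨N2, hN2⟩ := eventually_atTop.1 (h2 i hmem)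
  refine ⟨max N1 N2, fun m hm => ?_⟩
  have e1 := hN1 m (le_of_max_le_left hm)
  have e2 := hN2 m (le_of_max_le_right hm)
  have hcompl := Am_compl_eq hC1 m x
  have hd := hpos i
  rw [Real.dist_eq, abs_lt]
  constructor
  · linarith
  · linarith
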